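/- For every r > 0 there exists a real Banach space X such that 𝒯^cc(X) = 𝒯(X) = 𝒯^s(X) = r/(1+r). -/

import Mathlib

open Metric Set

noncomputable section

variable (X : Type*) [NormedAddCommGroup X] [NormedSpace ℝ X]

/-- A subset `U` of `X` is weakly open if it is open in the weak topology of `X`. -/
def IsWeaklyOpen (U : Set X) : Prop := IsOpen (toWeakSpace ℝ X '' U)

/-- The slice `S(B_X, f, α) = {x ∈ B_X : f x > 1 - α}` of the closed unit ball of `X`. -/
def sliceSet (f : X →L[ℝ] ℝ) (α : ℝ) : Set X :=
  {y ∈ closedBall (0 : X) 1 | 1 - α < f y}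

/-- `S` is a slice of the closed unit ball of `X`, i.e. `S = S(B_X, f, α)` for some norm-one
functional `f` and some `α > 0`. -/
def IsSlice (S : Set X) : Prop :=
  ∃ f : X →L[ℝ] ℝ, ‖f‖ = 1 ∧ ∃ α > (0 : ℝ), S = sliceSet X f α

/-- The Daugavet index of thickness `𝒯ˢ(X)`: the infimum of all `r > 0` such that some slice of
the closed unit ball is contained in a closed ball of radius `r` centered at a point of the unit
sphere. -/
def Ts : ℝ :=
  sInf {r : ℝ | 0 < r ∧ ∃ x : X, ‖x‖ = 1 ∧ ∃ S : Set X, IsSlice X S ∧ S ⊆ closedBall x r}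

/-- `W` is a nonempty relatively weakly open subset of the closed unit ball of `X`. -/
def IsRelWeakOpen (W : Set X) : Prop :=
  W.Nonempty ∧ ∃ U : Set X, IsWeaklyOpen X U ∧ W = closedBall (0 : X) 1 ∩ U

/-- The Daugavet index of thickness `𝒯(X)`: the infimum of all `r > 0` such that some nonempty
relatively weakly open subset of the closed unit ball is contained in a closed ball of radius `r`
centered at a point of the unit sphere. -/
def Tw : ℝ :=
  sInf {r : ℝ | 0 < r ∧ ∃ x : X, ‖x‖ = 1 ∧ ∃ W : Set X, IsRelWeakOpen X W ∧
    W ⊆ closedBall x r}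

/-- The convex combination `∑ i, l i • W i` of the sets `W i` (the set of all sums
`∑ i, l i • w i` with `w i ∈ W i`). -/
def comboSet {n : ℕ} (l : Fin n → ℝ) (W : Fin n → Set X) : Set X :=
  {z : X | ∃ w : Fin n → X, (∀ i, w i ∈ W i) ∧ z = ∑ i, l i • w i}

/-- The Daugavet index of thickness `𝒯ᶜᶜ(X)`: the infimum of all `r > 0` such that some convex
combination of nonempty relatively weakly open subsets of the closed unit ball is contained in a
closed ball of radius `r` centered at a point of the unit sphere. -/
def Tcc : ℝ :=
  sInf {r : ℝ | 0 < r ∧ ∃ x : X, ‖x‖ = 1 ∧ ∃ (n : ℕ) (l : Fin n → ℝ) (W : Fin n → Set X),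
    (∀ i, 0 ≤ l i) ∧ (∑ i, l i) = 1 ∧ (∀ i, IsRelWeakOpen X (W i)) ∧
    comboSet X l W ⊆ closedBall x r}

/-- `X` has the Daugavet property: for every `x` in the unit sphere, every `ε > 0` and every
slice `S` of the closed unit ball there exists `y ∈ S` with `‖x - y‖ ≥ 2 - ε`. -/
def DaugavetProperty : Prop :=
  ∀ x : X, ‖x‖ = 1 → ∀ ε > (0 : ℝ), ∀ S : Set X, IsSlice X S → ∃ y ∈ S, 2 - ε ≤ ‖x - y‖

namespace Stmt10Aux

set_option linter.unusedSectionVars false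

variable {X}

/-! ### General lemmas about the weak topology and slices -/

lemma weak_basis {U : Set X} (hU : IsWeaklyOpen X U) {w : X} (hw : w ∈ U) :
    ∃ (I : Finset (X →L[ℝ] ℝ)) (ε : ℝ), 0 < ε ∧
      ∀ y : X, (∀ f ∈ I, |f y - f w| < ε) → y ∈ U := by
  have hinj : Function.Injective ((topDualPairing ℝ X).flip) := by
    intro a b hab
    rw [NormedSpace.eq_iff_forall_dual_eq ℝ]
    intro g
    exact congrFun (congrArg DFunLike.coe hab) g
  have hemb := WeakBilin.isEmbedding (B := (topDualPairing ℝ X).flip) hinj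
  obtain ⟨O, hO, hpre⟩ := hemb.toIsInducing.isOpen_iff.mp hU
  have hwO : (fun g : X →L[ℝ] ℝ => g w) ∈ O := by
    have : toWeakSpace ℝ X w ∈ toWeakSpace ℝ X '' U := ⟨w, hw, rfl⟩
    rw [← hpre] at this
    exact this
  obtain ⟨I, u, h1, h2⟩ := isOpen_pi_iff.mp hO _ hwO
  have hball : ∀ f (hf : f ∈ I), ∃ δ : ℝ, 0 < δ ∧ Metric.ball (f w) δ ⊆ u f := by
    intro f hf
    exact Metric.isOpen_iff.mp (h1 f hf).1 _ (h1 f hf).2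
  choose δ hδpos hδsub using hball
  set A : Finset ℝ := insert (1 : ℝ) (I.attach.image fun p => δ p.1 p.2) with hA
  have hAne : A.Nonempty := ⟨1, Finset.mem_insert_self _ _⟩
  refine ⟨I, A.min' hAne, ?_, ?_⟩
  · have hpos : ∀ a ∈ A, 0 < a := by
      intro a ha
      rw [hA, Finset.mem_insert] at ha
      rcases ha with h | h
      · rw [h]; norm_num
      · obtain ⟨p, _, hp⟩ := Finset.mem_image.mp h
        rw [← hp]; exact hδpos _ _
    exact hpos _ (A.min'_mem hAne)
  · intro y hy
    have hyO : (fun g : X →L[ℝ] ℝ => g y) ∈ O := by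
      apply h2
      intro f hf
      apply hδsub f hf
      rw [Metric.mem_ball, Real.dist_eq]
      exact lt_of_lt_of_le (hy f hf) (A.min'_le _ (Finset.mem_insert_of_mem
        (Finset.mem_image.mpr ⟨⟨f, hf⟩, Finset.mem_attach _ _, rfl⟩)))
    have : toWeakSpace ℝ X y ∈ toWeakSpace ℝ X '' U := by
      rw [← hpre]; exact hyO
    obtain ⟨y', hy', he⟩ := this
    rwa [← (toWeakSpace ℝ X).injective he]

lemma slice_nonempty {f : X →L[ℝ] ℝ} (hf : ‖f‖ = 1) {α : ℝ} (hα : 0 < α) :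
    (sliceSet X f α).Nonempty := by
  by_cases h : 1 - α < 0
  · exact ⟨0, by simpa [sliceSet] using h⟩
  push_neg at h
  by_contra hc
  rw [Set.not_nonempty_iff_eq_empty, Set.eq_empty_iff_forall_notMem] at hc
  have hb : ∀ y : X, ‖y‖ ≤ 1 → f y ≤ 1 - α := by
    intro y hy
    by_contra hy2
    exact hc y ⟨by simpa using hy, by push_neg at hy2; exact hy2⟩
  have : ‖f‖ ≤ 1 - α := by
    apply ContinuousLinearMap.opNorm_le_bound _ h
    intro y
    rcases eq_or_ne y 0 with rfl | hy0
    · simp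
    · have hny : (0:ℝ) < ‖y‖ := norm_pos_iff.mpr hy0
      set u : X := ‖y‖⁻¹ • y with hu
      have hnu : ‖u‖ ≤ 1 := by
        rw [hu, norm_smul, norm_inv, norm_norm, inv_mul_cancel₀ hny.ne']
      have h1 : f u ≤ 1 - α := hb u hnu
      have h2 : f (-u) ≤ 1 - α := hb (-u) (by rwa [norm_neg])
      rw [map_neg] at h2
      have habs : |f u| ≤ 1 - α := abs_le.mpr ⟨by linarith, h1⟩
      have hyu : y = ‖y‖ • u := by
        rw [hu, smul_smul, mul_inv_cancel₀ hny.ne', one_smul]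
      have hfy : f y = ‖y‖ * f u := by
        conv_lhs => rw [hyu]
        rw [map_smul, smul_eq_mul]
      calc ‖f y‖ = ‖y‖ * |f u| := by
            rw [Real.norm_eq_abs, hfy, abs_mul, abs_of_pos hny]
        _ ≤ (1 - α) * ‖y‖ := by rw [mul_comm]; exact mul_le_mul_of_nonneg_right habs hny.le
  rw [hf] at this
  linarith

lemma slice_weaklyOpen (f : X →L[ℝ] ℝ) (α : ℝ) :
    IsWeaklyOpen X {y : X | 1 - α < f y} := by
  unfold IsWeaklyOpen
  have hc : Continuous fun v : WeakSpace ℝ X => (topDualPairing ℝ X).flip v f :=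
    WeakBilin.eval_continuous _ f
  have himg : toWeakSpace ℝ X '' {y : X | 1 - α < f y}
      = (fun v : WeakSpace ℝ X => (topDualPairing ℝ X).flip v f) ⁻¹' (Set.Ioi (1 - α)) := by
    ext v
    constructor
    · rintro ⟨y, hy, rfl⟩; exact hy
    · intro hv; exact ⟨v, hv, rfl⟩
  rw [himg]
  exact IsOpen.preimage hc isOpen_Ioi

lemma slice_eq_inter (f : X →L[ℝ] ℝ) (α : ℝ) :
    sliceSet X f α = closedBall (0 : X) 1 ∩ {y : X | 1 - α < f y} := rfl

/-- every slice is a nonempty relatively weakly open subset of the ball. -/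
lemma slice_isRelWeakOpen {f : X →L[ℝ] ℝ} (hf : ‖f‖ = 1) {α : ℝ} (hα : 0 < α) :
    IsRelWeakOpen X (sliceSet X f α) :=
  ⟨slice_nonempty hf hα, {y : X | 1 - α < f y}, slice_weaklyOpen f α, slice_eq_inter f α⟩

/-- The set of radii in the definition of `Ts` is included in that for `Tw`. -/
lemma TsSet_subset_TwSet :
    {r : ℝ | 0 < r ∧ ∃ x : X, ‖x‖ = 1 ∧ ∃ S : Set X, IsSlice X S ∧ S ⊆ closedBall x r} ⊆
    {r : ℝ | 0 < r ∧ ∃ x : X, ‖x‖ = 1 ∧ ∃ W : Set X, IsRelWeakOpen X W ∧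
      W ⊆ closedBall x r} := by
  rintro r ⟨hpos, x, hx, S, ⟨f, hf, α, hα, hSeq⟩, hsub⟩
  exact ⟨hpos, x, hx, S, hSeq ▸ slice_isRelWeakOpen hf hα, hsub⟩

/-- The set of radii in the definition of `Tw` is included in that for `Tcc`. -/
lemma TwSet_subset_TccSet :
    {r : ℝ | 0 < r ∧ ∃ x : X, ‖x‖ = 1 ∧ ∃ W : Set X, IsRelWeakOpen X W ∧
      W ⊆ closedBall x r} ⊆
    {r : ℝ | 0 < r ∧ ∃ x : X, ‖x‖ = 1 ∧ ∃ (n : ℕ) (l : Fin n → ℝ) (W : Fin n → Set X),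
      (∀ i, 0 ≤ l i) ∧ (∑ i, l i) = 1 ∧ (∀ i, IsRelWeakOpen X (W i)) ∧
      comboSet X l W ⊆ closedBall x r} := by
  rintro r ⟨hpos, x, hx, W, hWo, hsub⟩
  refine ⟨hpos, x, hx, 1, fun _ => 1, fun _ => W, fun _ => zero_le_one, by simp,
    fun _ => hWo, ?_⟩
  rintro z ⟨w, hw, hz⟩
  have : z = w 0 := by
    rw [hz, Fin.sum_univ_one, one_smul]
  rw [this]
  exact hsub (hw 0)

/-! ### The space `c₀` -/

abbrev c0 : Type := ZeroAtInftyContinuousMap ℕ ℝ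

lemma c0_apply_le (z : c0) (n : ℕ) : |z n| ≤ ‖z‖ := by
  rw [← ZeroAtInftyContinuousMap.norm_toBCF_eq_norm, ← Real.norm_eq_abs]
  exact BoundedContinuousFunction.norm_coe_le_norm z.toBCF n

lemma c0_norm_le {z : c0} {C : ℝ} (hC : 0 ≤ C) (h : ∀ n, |z n| ≤ C) : ‖z‖ ≤ C := by
  rw [← ZeroAtInftyContinuousMap.norm_toBCF_eq_norm]
  exact (BoundedContinuousFunction.norm_le hC).mpr (by simpa [Real.norm_eq_abs] using h)

/-- the `n`-th standard basis vector of `c0`. -/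
def en (n : ℕ) : c0 :=
  { toFun := fun m => if m = n then (1 : ℝ) else 0
    continuous_toFun := continuous_of_discreteTopology
    zero_at_infty' := by
      rw [Filter.cocompact_eq_cofinite]
      apply Filter.Tendsto.congr' (f₁ := fun _ => (0:ℝ))
      · rw [Filter.eventuallyEq_iff_exists_mem]
        refine ⟨{n}ᶜ, ?_, fun m hm => ?_⟩
        · rw [Filter.mem_cofinite, compl_compl]; exact Set.finite_singleton n
        · simp only [Set.mem_compl_iff, Set.mem_singleton_iff] at hm
          simp [hm]
      · exact tendsto_const_nhds }

@[simp] lemma en_apply (n m : ℕ) : en n m = if m = n then (1:ℝ) else 0 := rfl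

/-- truncation of `z` to coordinates `< N`. -/
def trunc (z : c0) (N : ℕ) : c0 :=
  { toFun := fun m => if m < N then z m else 0
    continuous_toFun := continuous_of_discreteTopology
    zero_at_infty' := by
      rw [Filter.cocompact_eq_cofinite]
      apply Filter.Tendsto.congr' (f₁ := fun _ => (0:ℝ))
      · rw [Filter.eventuallyEq_iff_exists_mem]
        refine ⟨{m | N ≤ m}, ?_, fun m hm => ?_⟩
        · rw [Filter.mem_cofinite]
          have : {m | N ≤ m}ᶜ ⊆ Set.Iio N := by intro m hm; simpa using hm
          exact (Set.finite_Iio N).subset this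
        · simp only [Set.mem_setOf_eq] at hm
          simp [Nat.not_lt.mpr hm]
      · exact tendsto_const_nhds }

@[simp] lemma trunc_apply (z : c0) (N m : ℕ) : trunc z N m = if m < N then z m else 0 := rfl

lemma trunc_tendsto (z : c0) : Filter.Tendsto (fun N => trunc z N) Filter.atTop (nhds z) := by
  rw [Metric.tendsto_atTop]
  intro ε hε
  have hz := z.zero_at_infty'
  rw [Filter.cocompact_eq_cofinite, Nat.cofinite_eq_atTop] at hz
  have := (Metric.tendsto_atTop.mp hz) (ε/2) (by linarith)
  obtain ⟨N0, hN0⟩ := this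
  refine ⟨N0, fun N hN => ?_⟩
  rw [dist_eq_norm]
  have hb : ‖trunc z N - z‖ ≤ ε/2 := by
    apply c0_norm_le (by linarith)
    intro m
    rw [ZeroAtInftyContinuousMap.sub_apply, trunc_apply]
    by_cases hm : m < N
    · simp [hm]; linarith
    · simp only [hm, if_false, zero_sub, abs_neg]
      have hle : N0 ≤ m := le_trans hN (Nat.not_lt.mp hm)
      have h2 : dist (z m) 0 < ε/2 := hN0 m hle
      rw [Real.dist_eq, sub_zero] at h2
      linarith
  linarith

/-! ### The renormed space `XSp s` -/

/-- The renormed space `ℝ ⊕ c₀` with norm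
`max (max |a| ‖z‖) ((|a| + ‖z‖)/(1+s))`. -/
@[nolint unusedArguments]
def XSp (_s : ℝ) : Type := ℝ × c0

variable {s : ℝ}

instance : AddCommGroup (XSp s) := inferInstanceAs (AddCommGroup (ℝ × c0))
instance : Module ℝ (XSp s) := inferInstanceAs (Module ℝ (ℝ × c0))

/-- the norm on `XSp s`. -/
def nX (s : ℝ) (x : ℝ × c0) : ℝ := max (max ‖x.1‖ ‖x.2‖) ((‖x.1‖ + ‖x.2‖) / (1 + s))

variable [Fact (0 < s ∧ s < 1)]

lemma hs0 : (0:ℝ) < s := (Fact.out : 0 < s ∧ s < 1).1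
lemma hs1 : s < 1 := (Fact.out : 0 < s ∧ s < 1).2
lemma hs_denom : (0:ℝ) < 1 + s := by have := hs0 (s := s); linarith

lemma nX_nonneg (x : ℝ × c0) : 0 ≤ nX s x :=
  le_trans (norm_nonneg x.1) (le_trans (le_max_left _ _) (le_max_left _ _))

lemma fst_le_nX (x : ℝ × c0) : ‖x.1‖ ≤ nX s x :=
  le_trans (le_max_left _ _) (le_max_left _ _)

lemma snd_le_nX (x : ℝ × c0) : ‖x.2‖ ≤ nX s x :=
  le_trans (le_max_right _ _) (le_max_left _ _)

lemma sum_le_nX (x : ℝ × c0) : ‖x.1‖ + ‖x.2‖ ≤ (1 + s) * nX s x := by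
  have h := le_max_right (max ‖x.1‖ ‖x.2‖) ((‖x.1‖ + ‖x.2‖) / (1 + s))
  rw [div_le_iff₀ (hs_denom (s := s))] at h
  calc ‖x.1‖ + ‖x.2‖ ≤ nX s x * (1 + s) := h
    _ = (1 + s) * nX s x := mul_comm _ _

lemma nX_le {x : ℝ × c0} {C : ℝ} (h1 : ‖x.1‖ ≤ C) (h2 : ‖x.2‖ ≤ C)
    (h3 : ‖x.1‖ + ‖x.2‖ ≤ (1 + s) * C) : nX s x ≤ C := by
  apply max_le (max_le h1 h2)
  rw [div_le_iff₀ (hs_denom (s := s))]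
  calc ‖x.1‖ + ‖x.2‖ ≤ (1+s) * C := h3
    _ = C * (1+s) := mul_comm _ _

instance : NormedAddCommGroup (XSp s) :=
  AddGroupNorm.toNormedAddCommGroup
    { toFun := fun x => nX s x
      map_zero' := by
        show nX s (0 : ℝ × c0) = 0
        simp [nX]
      add_le' := fun x y => by
        show nX s ((x : ℝ × c0) + y) ≤ nX s x + nX s y
        have hd := hs_denom (s := s)
        apply nX_le
        · calc ‖((x : ℝ × c0) + y).1‖ = ‖(x : ℝ × c0).1 + (y : ℝ × c0).1‖ := rfl
            _ ≤ ‖(x : ℝ × c0).1‖ + ‖(y : ℝ × c0).1‖ := norm_add_le _ _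
            _ ≤ nX s x + nX s y := add_le_add (fst_le_nX _) (fst_le_nX _)
        · calc ‖((x : ℝ × c0) + y).2‖ = ‖(x : ℝ × c0).2 + (y : ℝ × c0).2‖ := rfl
            _ ≤ ‖(x : ℝ × c0).2‖ + ‖(y : ℝ × c0).2‖ := norm_add_le _ _
            _ ≤ nX s x + nX s y := add_le_add (snd_le_nX _) (snd_le_nX _)
        · have e1 : ‖((x : ℝ × c0) + y).1‖ ≤ ‖(x : ℝ × c0).1‖ + ‖(y : ℝ × c0).1‖ :=
            norm_add_le _ _
          have e2 : ‖((x : ℝ × c0) + y).2‖ ≤ ‖(x : ℝ × c0).2‖ + ‖(y : ℝ × c0).2‖ :=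
            norm_add_le _ _
          have f1 := sum_le_nX (s := s) x
          have f2 := sum_le_nX (s := s) y
          have : (1+s) * (nX s x + nX s y) = (1+s) * nX s x + (1+s) * nX s y := by ring
          rw [this]
          linarith
      neg' := fun x => by
        show nX s (-(x : ℝ × c0)) = nX s x
        have h1 : (-(x : ℝ × c0)).1 = -(x : ℝ × c0).1 := rfl
        have h2 : (-(x : ℝ × c0)).2 = -(x : ℝ × c0).2 := rfl
        unfold nX
        rw [h1, h2, norm_neg, norm_neg]
      eq_zero_of_map_eq_zero' := fun x hx => by
        have h1 : ‖(x : ℝ × c0).1‖ ≤ 0 := hx ▸ fst_le_nX (s := s) x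
        have h2 : ‖(x : ℝ × c0).2‖ ≤ 0 := hx ▸ snd_le_nX (s := s) x
        have e1 : (x : ℝ × c0).1 = 0 := norm_le_zero_iff.mp h1
        have e2 : (x : ℝ × c0).2 = 0 := norm_le_zero_iff.mp h2
        show (x : ℝ × c0) = (0 : ℝ × c0)
        exact Prod.ext e1 e2 }

lemma norm_def (x : XSp s) : ‖x‖ = nX s x := rfl

lemma nX_smul (c : ℝ) (x : ℝ × c0) : nX s (c • x) = ‖c‖ * nX s x := by
  have h1 : ‖(c • x).1‖ = ‖c‖ * ‖x.1‖ := norm_smul (α := ℝ) (β := ℝ) c x.1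
  have h2 : ‖(c • x).2‖ = ‖c‖ * ‖x.2‖ := norm_smul (α := ℝ) (β := c0) c x.2
  unfold nX
  rw [h1, h2]
  rw [← mul_add, mul_div_assoc, ← mul_max_of_nonneg _ _ (norm_nonneg c),
    ← mul_max_of_nonneg _ _ (norm_nonneg c)]

instance : NormedSpace ℝ (XSp s) where
  norm_smul_le c x := by
    have h : ‖c • x‖ = nX s (c • (x : ℝ × c0)) := rfl
    rw [h, norm_def]; exact le_of_eq (nX_smul c x)

/-- identity map to the product space. -/
def toProd (x : XSp s) : ℝ × c0 := x

lemma nX_le_two_prod (x : ℝ × c0) : nX s x ≤ 2 * ‖x‖ := by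
  have hx : ‖x‖ = max ‖x.1‖ ‖x.2‖ := Prod.norm_def x
  have h1 : ‖x.1‖ ≤ ‖x‖ := hx ▸ le_max_left _ _
  have h2 : ‖x.2‖ ≤ ‖x‖ := hx ▸ le_max_right _ _
  have hd := hs_denom (s := s)
  have hss := hs0 (s := s)
  apply max_le (max_le (by linarith [norm_nonneg x]) (by linarith [norm_nonneg x]))
  rw [div_le_iff₀ hd]
  nlinarith [norm_nonneg x]

lemma prod_le_nX (x : ℝ × c0) : ‖x‖ ≤ nX s x := by
  rw [Prod.norm_def]
  exact max_le (fst_le_nX x) (snd_le_nX x)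

instance : CompleteSpace (XSp s) := by
  have hlip : LipschitzWith 1 (toProd (s := s)) := by
    apply LipschitzWith.of_dist_le_mul
    intro x y
    rw [NNReal.coe_one, one_mul, dist_eq_norm, dist_eq_norm]
    exact prod_le_nX (s := s) (x - y)
  have hanti : AntilipschitzWith 2 (toProd (s := s)) := by
    apply AntilipschitzWith.of_le_mul_dist
    intro x y
    rw [dist_eq_norm, dist_eq_norm]
    have h0 : toProd x - toProd y = ((x - y : XSp s) : ℝ × c0) := rfl
    rw [h0]
    have h := nX_le_two_prod (s := s) ((x - y : XSp s) : ℝ × c0)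
    rw [← norm_def] at h
    simpa using h
  have hui : IsUniformInducing (toProd (s := s)) :=
    hanti.isUniformInducing hlip.uniformContinuous
  have hsurj : Function.Surjective (toProd (s := s)) := fun y => ⟨y, rfl⟩
  exact (hui.completeSpace_congr hsurj).mpr inferInstance

instance : Nontrivial (XSp s) := by
  refine ⟨((1:ℝ), (0:c0)), 0, fun h => ?_⟩
  have : ((1:ℝ), (0:c0)).1 = ((0:ℝ), (0:c0)).1 := congrArg Prod.fst h
  simp at this

/-! ### special elements and maps of `XSp` -/

/-- the distinguished point of the unit sphere. -/
def x0 (s : ℝ) : XSp s := ((1:ℝ), (0:c0))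

lemma norm_x0 : ‖x0 (s := s)‖ = 1 := by
  rw [norm_def]
  unfold x0 nX
  have hd := hs_denom (s := s)
  have hss := hs0 (s := s)
  have h1 : ‖(1:ℝ)‖ = 1 := by norm_num
  have h2 : ‖(0:c0)‖ = 0 := norm_zero
  rw [h1, h2]
  rw [max_eq_left (by norm_num : (0:ℝ) ≤ 1)]
  rw [max_eq_left]
  rw [add_zero, div_le_one hd]
  linarith

/-- the first coordinate functional. -/
def fstL (s : ℝ) [Fact (0 < s ∧ s < 1)] : XSp s →L[ℝ] ℝ :=
  LinearMap.mkContinuous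
    { toFun := fun x : XSp s => (x : ℝ × c0).1
      map_add' := fun _ _ => rfl
      map_smul' := fun _ _ => rfl } 1
    (fun x => by rw [one_mul, norm_def]; exact fst_le_nX _)

lemma fstL_apply (x : XSp s) : fstL s x = (x : ℝ × c0).1 := rfl

lemma norm_fstL : ‖fstL s‖ = 1 := by
  apply le_antisymm
  · exact LinearMap.mkContinuous_norm_le _ zero_le_one _
  · have h := (fstL s).le_opNorm (x0 s)
    rw [fstL_apply, norm_x0, mul_one] at h
    have : ‖(x0 (s := s) : ℝ × c0).1‖ = 1 := by norm_num [x0]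
    rw [this] at h
    exact h

/-- inclusion of `c0` into `XSp s`. -/
def mk0L (s : ℝ) : c0 →ₗ[ℝ] XSp s where
  toFun z := ((0:ℝ), z)
  map_add' a b := by
    show ((0:ℝ), a + b) = (((0:ℝ), a) + ((0:ℝ), b) : ℝ × c0)
    rw [Prod.mk_add_mk, add_zero]
  map_smul' c a := by
    show ((0:ℝ), c • a) = (c • ((0:ℝ), a) : ℝ × c0)
    rw [Prod.smul_mk, smul_zero]

lemma mk0L_apply (z : c0) : mk0L s z = ((0:ℝ), z) := rfl

lemma norm_mk0L (z : c0) : ‖mk0L s z‖ = ‖z‖ := by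
  rw [norm_def]
  show nX s ((0:ℝ), z) = ‖z‖
  unfold nX
  have hd := hs_denom (s := s)
  have hss := hs0 (s := s)
  simp only [norm_zero, zero_add]
  rw [max_eq_right (norm_nonneg z), max_eq_left]
  exact div_le_self (norm_nonneg z) (by linarith)

/-- continuous version of `mk0L`. -/
def mk0C (s : ℝ) [Fact (0 < s ∧ s < 1)] : c0 →L[ℝ] XSp s :=
  LinearMap.mkContinuous (mk0L s) 1 (fun z => by rw [one_mul, norm_mk0L])

lemma mk0C_apply (z : c0) : mk0C s z = ((0:ℝ), z) := rfl

/-- the second coordinate projection as a linear map. -/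
def sndL (s : ℝ) : XSp s →ₗ[ℝ] c0 where
  toFun x := (x : ℝ × c0).2
  map_add' _ _ := rfl
  map_smul' _ _ := rfl

/-- evaluation at a coordinate as a linear map. -/
def evalL (m : ℕ) : c0 →ₗ[ℝ] ℝ where
  toFun z := z m
  map_add' a b := rfl
  map_smul' c a := rfl

/-! ### the key functional-analytic facts -/

lemma tendsto_g_en (g : XSp s →L[ℝ] ℝ) :
    Filter.Tendsto (fun m => g (mk0C s (en m))) Filter.atTop (nhds 0) := by
  rw [tendsto_zero_iff_norm_tendsto_zero]
  have hsum : Summable (fun m => ‖g (mk0C s (en m))‖) := by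
    apply summable_of_sum_range_le (c := ‖g‖) (fun n => norm_nonneg _)
    intro n
    set σ : ℕ → ℝ := fun i => if g (mk0C s (en i)) < 0 then (-1:ℝ) else 1 with hσ
    have hσ1 : ∀ i, |σ i| = 1 := by
      intro i
      rw [hσ]
      dsimp only
      split <;> norm_num
    have hterm : ∀ i, ‖g (mk0C s (en i))‖ = σ i * g (mk0C s (en i)) := by
      intro i
      rw [Real.norm_eq_abs, hσ]
      dsimp only
      by_cases h : g (mk0C s (en i)) < 0
      · rw [if_pos h, abs_of_neg h]; ring
      · rw [if_neg h, abs_of_nonneg (not_lt.mp h), one_mul]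
    set z : c0 := ∑ i ∈ Finset.range n, σ i • en i with hz
    have hznorm : ‖z‖ ≤ 1 := by
      apply c0_norm_le zero_le_one
      intro m
      have hzm : z m = ∑ i ∈ Finset.range n, σ i * en i m := by
        rw [hz]
        have := map_sum (evalL m) (fun i => σ i • en i) (Finset.range n)
        have h2 : ∀ i, evalL m (σ i • en i) = σ i * en i m := by
          intro i
          rw [map_smul]
          rfl
        calc (∑ i ∈ Finset.range n, σ i • en i : c0) m
            = evalL m (∑ i ∈ Finset.range n, σ i • en i) := rfl
          _ = ∑ i ∈ Finset.range n, evalL m (σ i • en i) := this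
          _ = ∑ i ∈ Finset.range n, σ i * en i m := Finset.sum_congr rfl fun i _ => h2 i
      rw [hzm]
      have hee : ∀ i, σ i * en i m = if m = i then σ i else 0 := by
        intro i
        rw [en_apply]
        split <;> ring
      rw [Finset.sum_congr rfl fun i _ => hee i, Finset.sum_ite_eq]
      split
      · rw [hσ1 m]
      · norm_num
    have hcalc : ∑ i ∈ Finset.range n, ‖g (mk0C s (en i))‖ = g (mk0C s z) := by
      rw [hz, map_sum, map_sum]
      apply Finset.sum_congr rfl
      intro i _
      rw [hterm i, map_smul, map_smul, smul_eq_mul]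
    rw [hcalc]
    calc g (mk0C s z) ≤ ‖g (mk0C s z)‖ := le_abs_self _
      _ ≤ ‖g‖ * ‖mk0C s z‖ := g.le_opNorm _
      _ = ‖g‖ * ‖z‖ := by rw [show ‖mk0C s z‖ = ‖z‖ from norm_mk0L z]
      _ ≤ ‖g‖ * 1 := mul_le_mul_of_nonneg_left hznorm (norm_nonneg g)
      _ = ‖g‖ := mul_one _
  exact hsum.tendsto_atTop_zero

/-- Upper bound: small slices around `x0`. -/
lemma slice_subset_ball (ε : ℝ) (hε : 0 < ε) :
    sliceSet (XSp s) (fstL s) (ε/2) ⊆ closedBall (x0 s) (s + ε) := by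
  intro y hy
  obtain ⟨hyb, hyf⟩ := hy
  rw [mem_closedBall_zero_iff] at hyb
  have hss := hs0 (s := s)
  have hd := hs_denom (s := s)
  set a : ℝ := (y : ℝ × c0).1 with ha
  set z : c0 := (y : ℝ × c0).2 with hzdef
  have hfa : fstL s y = a := rfl
  rw [hfa] at hyf
  have hna : ‖a‖ ≤ 1 := le_trans (fst_le_nX _) (by rw [← norm_def]; exact hyb)
  have hsum : ‖a‖ + ‖z‖ ≤ 1 + s := by
    have := sum_le_nX (s := s) (y : ℝ × c0)
    rw [← norm_def] at this
    calc ‖a‖ + ‖z‖ ≤ (1+s) * ‖y‖ := this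
      _ ≤ (1+s) * 1 := mul_le_mul_of_nonneg_left hyb (by linarith)
      _ = 1 + s := mul_one _
  have haa : |a| ≤ 1 := by rwa [← Real.norm_eq_abs]
  have ha1 : a ≤ 1 := le_trans (le_abs_self a) haa
  have hza : |a| + ‖z‖ ≤ 1 + s := by rwa [← Real.norm_eq_abs]
  have hzn : ‖z‖ ≤ s + ε/2 := by
    have : a ≤ |a| := le_abs_self a
    linarith
  rw [mem_closedBall, dist_eq_norm, norm_def]
  have hy1 : ((y - x0 s : XSp s) : ℝ × c0).1 = a - 1 := rfl
  have hy2 : ((y - x0 s : XSp s) : ℝ × c0).2 = z - 0 := rfl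
  have hab : ‖a - 1‖ ≤ ε/2 := by
    rw [Real.norm_eq_abs, abs_of_nonpos (by linarith)]
    linarith
  apply nX_le
  · rw [hy1]; linarith
  · rw [hy2, sub_zero]; linarith
  · rw [hy1, hy2, sub_zero]
    have hC : 0 ≤ s + ε := by linarith
    nlinarith

/-- Main lower bound: every convex combination of relatively weakly open subsets of the unit
ball contains a point at distance at least `s` from any given point. -/
lemma combo_far (x : XSp s) {n : ℕ} {l : Fin n → ℝ} {W : Fin n → Set (XSp s)}
    (hl1 : (∑ i, l i) = 1) (hW : ∀ i, IsRelWeakOpen (XSp s) (W i)) :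
    ∃ c ∈ comboSet (XSp s) l W, s ≤ ‖x - c‖ := by
  classical
  have hss := hs0 (s := s)
  have hs1' := hs1 (s := s)
  have hw' : ∀ i, ∃ w, w ∈ W i := fun i => (hW i).1
  choose w hw using hw'
  have hU' : ∀ i, ∃ U, IsWeaklyOpen (XSp s) U ∧ W i = closedBall 0 1 ∩ U :=
    fun i => (hW i).2
  choose U hUo hUeq using hU'
  have hwb : ∀ i, w i ∈ closedBall (0 : XSp s) 1 ∧ w i ∈ U i := by
    intro i
    have := hw i
    rw [hUeq i] at this
    exact this
  have hwnorm : ∀ i, ‖w i‖ ≤ 1 := fun i => mem_closedBall_zero_iff.mp (hwb i).1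
  have hbasis : ∀ i, ∃ (I : Finset (XSp s →L[ℝ] ℝ)) (ε : ℝ), 0 < ε ∧
      ∀ y, (∀ f ∈ I, |f y - f (w i)| < ε) → y ∈ U i :=
    fun i => weak_basis (hUo i) (hwb i).2
  choose I ε hεpos hI using hbasis
  -- choose the truncation level
  have hNev : ∀ᶠ N in Filter.atTop, ∀ i, ∀ f ∈ I i,
      |f (mk0C s (trunc ((w i : ℝ × c0)).2 N - ((w i : ℝ × c0)).2))| < ε i / 2 := by
    rw [Filter.eventually_all]
    intro i
    rw [Filter.eventually_all_finset]
    intro f hf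
    have ht : Filter.Tendsto (fun N => trunc ((w i : ℝ × c0)).2 N - ((w i : ℝ × c0)).2)
        Filter.atTop (nhds 0) := by
      have := (trunc_tendsto ((w i : ℝ × c0)).2).sub_const ((w i : ℝ × c0)).2
      rwa [sub_self] at this
    have hcont : Filter.Tendsto
        (fun N => f (mk0C s (trunc ((w i : ℝ × c0)).2 N - ((w i : ℝ × c0)).2)))
        Filter.atTop (nhds 0) := by
      have hc : Continuous fun z : c0 => f (mk0C s z) :=
        f.continuous.comp (mk0C s).continuous
      have := (hc.tendsto 0).comp ht
      simpa only [Function.comp_def, map_zero] using this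
    have := Metric.tendsto_nhds.mp hcont (ε i / 2) (by linarith [hεpos i])
    apply this.mono
    intro N hN
    rwa [Real.dist_eq, sub_zero] at hN
  obtain ⟨N0, hN0⟩ := hNev.exists
  -- choose the far coordinate
  have hmev : ∀ᶠ m in Filter.atTop, N0 ≤ m ∧ ∀ i, ∀ f ∈ I i,
      s * |f (mk0C s (en m))| < ε i / 2 := by
    apply Filter.Eventually.and (Filter.eventually_ge_atTop N0)
    rw [Filter.eventually_all]
    intro i
    rw [Filter.eventually_all_finset]
    intro f hf
    have := Metric.tendsto_nhds.mp (tendsto_g_en (s := s) f) (ε i / 2 / s)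
      (div_pos (by linarith [hεpos i]) hss)
    apply this.mono
    intro m hm
    rw [Real.dist_eq, sub_zero] at hm
    rw [lt_div_iff₀ hss] at hm
    calc s * |f (mk0C s (en m))| = |f (mk0C s (en m))| * s := mul_comm _ _
      _ < ε i / 2 := hm
  obtain ⟨m, hmN0, hm⟩ := hmev.exists
  -- the sign
  set σ : ℝ := if (x : ℝ × c0).2 m ≤ 0 then (1:ℝ) else -1 with hσ
  have hσ1 : |σ| = 1 := by rw [hσ]; split <;> norm_num
  have hσs : |σ * s| = s := by rw [abs_mul, hσ1, one_mul, abs_of_pos hss]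
  -- the perturbed points
  set y : Fin n → XSp s :=
    fun i => ((((w i : ℝ × c0)).1 : ℝ),
      trunc ((w i : ℝ × c0)).2 N0 + (σ * s) • en m) with hy
  -- coordinates of the second components
  have hy2m : ∀ i, (((y i : ℝ × c0)).2) m = σ * s := by
    intro i
    have : (((y i : ℝ × c0)).2) = trunc ((w i : ℝ × c0)).2 N0 + (σ * s) • en m := rfl
    rw [this, ZeroAtInftyContinuousMap.add_apply,
      ZeroAtInftyContinuousMap.smul_apply, trunc_apply, en_apply]
    rw [if_neg (Nat.not_lt.mpr hmN0), if_pos rfl, zero_add, smul_eq_mul, mul_one]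
  -- the perturbed points are in the unit ball
  have hynorm : ∀ i, ‖y i‖ ≤ 1 := by
    intro i
    set z : c0 := ((w i : ℝ × c0)).2 with hzdef
    have hv : ∀ j, |(trunc z N0 + (σ * s) • en m : c0) j| ≤ max ‖z‖ s := by
      intro j
      rw [ZeroAtInftyContinuousMap.add_apply, ZeroAtInftyContinuousMap.smul_apply,
        trunc_apply, en_apply]
      by_cases hj : j = m
      · subst hj
        rw [if_neg (Nat.not_lt.mpr hmN0), if_pos rfl, zero_add, smul_eq_mul, mul_one]
        exact le_trans (le_of_eq hσs) (le_max_right _ _)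
      · rw [if_neg hj, smul_zero, add_zero]
        by_cases hjN : j < N0
        · rw [if_pos hjN]
          exact le_trans (c0_apply_le z j) (le_max_left _ _)
        · rw [if_neg hjN, abs_zero]
          exact le_trans (norm_nonneg z) (le_max_left _ _)
    have hvn : ‖(trunc z N0 + (σ * s) • en m : c0)‖ ≤ max ‖z‖ s :=
      c0_norm_le (le_trans hss.le (le_max_right _ _)) hv
    have ha : ‖((w i : ℝ × c0)).1‖ ≤ 1 := le_trans (fst_le_nX _) (by
      rw [← norm_def]; exact hwnorm i)
    have hsum : ‖((w i : ℝ × c0)).1‖ + ‖z‖ ≤ 1 + s := by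
      have := sum_le_nX (s := s) (w i : ℝ × c0)
      rw [← norm_def] at this
      calc ‖((w i : ℝ × c0)).1‖ + ‖z‖ ≤ (1+s) * ‖w i‖ := this
        _ ≤ (1+s) * 1 := mul_le_mul_of_nonneg_left (hwnorm i) (by linarith)
        _ = 1 + s := mul_one _
    have hzn : ‖z‖ ≤ 1 := le_trans (snd_le_nX _) (by rw [← norm_def]; exact hwnorm i)
    rw [norm_def]
    apply nX_le
    · exact ha
    · show ‖(trunc z N0 + (σ * s) • en m : c0)‖ ≤ 1
      exact le_trans hvn (max_le hzn hs1'.le)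
    · show ‖((w i : ℝ × c0)).1‖ + ‖(trunc z N0 + (σ * s) • en m : c0)‖ ≤ (1+s) * 1
      rw [mul_one]
      rcases le_total ‖z‖ s with hc | hc
      · have : max ‖z‖ s = s := max_eq_right hc
        rw [this] at hvn
        linarith
      · have : max ‖z‖ s = ‖z‖ := max_eq_left hc
        rw [this] at hvn
        linarith
  -- the perturbed points are in the weakly open sets
  have hyU : ∀ i, y i ∈ U i := by
    intro i
    apply hI i
    intro f hf
    have hdiff : y i - w i = mk0C s (trunc ((w i : ℝ × c0)).2 N0 - ((w i : ℝ × c0)).2)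
        + (σ * s) • mk0C s (en m) := by
      apply Prod.ext
      · show (((y i : ℝ × c0)).1 - ((w i : ℝ × c0)).1 : ℝ) = ((0:ℝ) + (σ * s) • (0:ℝ))
        have : (((y i : ℝ × c0)).1 : ℝ) = ((w i : ℝ × c0)).1 := rfl
        rw [this, sub_self, smul_zero, add_zero]
      · show (((y i : ℝ × c0)).2 - ((w i : ℝ × c0)).2 : c0)
          = (trunc ((w i : ℝ × c0)).2 N0 - ((w i : ℝ × c0)).2) + (σ * s) • en m
        have : (((y i : ℝ × c0)).2 : c0)
            = trunc ((w i : ℝ × c0)).2 N0 + (σ * s) • en m := rfl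
        rw [this, add_sub_right_comm]
    have hfd : f (y i) - f (w i)
        = f (mk0C s (trunc ((w i : ℝ × c0)).2 N0 - ((w i : ℝ × c0)).2))
          + (σ * s) * f (mk0C s (en m)) := by
      rw [← map_sub, hdiff, map_add, map_smul, smul_eq_mul]
    rw [hfd]
    have hb1 := hN0 i f hf
    have hb2 := hm i f hf
    calc |f (mk0C s (trunc ((w i : ℝ × c0)).2 N0 - ((w i : ℝ × c0)).2))
          + (σ * s) * f (mk0C s (en m))|
        ≤ |f (mk0C s (trunc ((w i : ℝ × c0)).2 N0 - ((w i : ℝ × c0)).2))|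
          + |(σ * s) * f (mk0C s (en m))| := abs_add_le _ _
      _ = |f (mk0C s (trunc ((w i : ℝ × c0)).2 N0 - ((w i : ℝ × c0)).2))|
          + s * |f (mk0C s (en m))| := by rw [abs_mul, hσs]
      _ < ε i / 2 + ε i / 2 := add_lt_add hb1 hb2
      _ = ε i := add_halves _
  have hyW : ∀ i, y i ∈ W i := by
    intro i
    rw [hUeq i]
    exact ⟨mem_closedBall_zero_iff.mpr (hynorm i), hyU i⟩
  -- the convex combination point
  refine ⟨∑ i, l i • y i, ⟨y, hyW, rfl⟩, ?_⟩
  -- compute the m-th coordinate of the second component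
  set c : XSp s := ∑ i, l i • y i with hc
  have hc2 : ((c : ℝ × c0)).2 = ∑ i, l i • ((y i : ℝ × c0)).2 := by
    rw [hc]
    have h1 := map_sum (sndL s) (fun i => l i • y i) Finset.univ
    have h2 : ∀ i, sndL s (l i • y i) = l i • ((y i : ℝ × c0)).2 :=
      fun i => by rw [map_smul]; rfl
    calc ((∑ i, l i • y i : XSp s) : ℝ × c0).2 = sndL s (∑ i, l i • y i) := rfl
      _ = ∑ i, sndL s (l i • y i) := h1
      _ = ∑ i, l i • ((y i : ℝ × c0)).2 := Finset.sum_congr rfl fun i _ => h2 i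
  have hc2m : ((c : ℝ × c0)).2 m = σ * s := by
    have h1 : ((c : ℝ × c0)).2 m = evalL m ((c : ℝ × c0)).2 := rfl
    rw [h1, hc2, map_sum]
    have h2 : ∀ i, evalL m (l i • ((y i : ℝ × c0)).2) = l i * (σ * s) := by
      intro i
      rw [map_smul, smul_eq_mul]
      congr 1
      exact hy2m i
    rw [Finset.sum_congr rfl fun i _ => h2 i, ← Finset.sum_mul, hl1, one_mul]
  -- conclude
  have hxc2 : ((x - c : XSp s) : ℝ × c0).2 m = (x : ℝ × c0).2 m - σ * s := by
    have h1 : ((x - c : XSp s) : ℝ × c0).2 = (x : ℝ × c0).2 - ((c : ℝ × c0)).2 := rfl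
    rw [h1, ZeroAtInftyContinuousMap.sub_apply, hc2m]
  have hfar : s ≤ |((x - c : XSp s) : ℝ × c0).2 m| := by
    rw [hxc2, hσ]
    by_cases h : (x : ℝ × c0).2 m ≤ 0
    · rw [if_pos h, one_mul]
      rw [abs_of_nonpos (by linarith)]
      linarith
    · rw [if_neg h]
      push_neg at h
      have : (x : ℝ × c0).2 m - (-1) * s = (x : ℝ × c0).2 m + s := by ring
      rw [this, abs_of_pos (by linarith)]
      linarith
  calc s ≤ |((x - c : XSp s) : ℝ × c0).2 m| := hfar
    _ ≤ ‖((x - c : XSp s) : ℝ × c0).2‖ := c0_apply_le _ m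
    _ ≤ nX s ((x - c : XSp s) : ℝ × c0) := snd_le_nX _
    _ = ‖x - c‖ := (norm_def _).symm

end Stmt10Aux

open Stmt10Aux in
theorem stmt_10 (r : ℝ) (hr : 0 < r) :
    ∃ (X : Type) (_ : NormedAddCommGroup X) (_ : NormedSpace ℝ X) (_ : CompleteSpace X)
      (_ : Nontrivial X), Tcc X = r / (1 + r) ∧ Tw X = r / (1 + r) ∧ Ts X = r / (1 + r) := by
  have hr1 : (0:ℝ) < 1 + r := by linarith
  set s : ℝ := r / (1 + r) with hsdef
  have hs0' : 0 < s := div_pos hr hr1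
  have hs1' : s < 1 := (div_lt_one hr1).mpr (by linarith)
  haveI : Fact (0 < s ∧ s < 1) := ⟨hs0', hs1'⟩
  refine ⟨XSp s, inferInstance, inferInstance, inferInstance, inferInstance, ?_⟩
  -- the three defining sets
  set Tss : Set ℝ := {r' : ℝ | 0 < r' ∧ ∃ x : XSp s, ‖x‖ = 1 ∧
    ∃ S : Set (XSp s), IsSlice (XSp s) S ∧ S ⊆ closedBall x r'} with hTss
  set Tws : Set ℝ := {r' : ℝ | 0 < r' ∧ ∃ x : XSp s, ‖x‖ = 1 ∧
    ∃ W : Set (XSp s), IsRelWeakOpen (XSp s) W ∧ W ⊆ closedBall x r'} with hTws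
  set Tccs : Set ℝ := {r' : ℝ | 0 < r' ∧ ∃ x : XSp s, ‖x‖ = 1 ∧
    ∃ (n : ℕ) (l : Fin n → ℝ) (W : Fin n → Set (XSp s)),
    (∀ i, 0 ≤ l i) ∧ (∑ i, l i) = 1 ∧ (∀ i, IsRelWeakOpen (XSp s) (W i)) ∧
    comboSet (XSp s) l W ⊆ closedBall x r'} with hTccs
  have hsub1 : Tss ⊆ Tws := TsSet_subset_TwSet
  have hsub2 : Tws ⊆ Tccs := TwSet_subset_TccSet
  have hmem : ∀ ε : ℝ, 0 < ε → (s + ε) ∈ Tss := by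
    intro ε hε
    refine ⟨by linarith, x0 s, norm_x0, sliceSet (XSp s) (fstL s) (ε/2),
      ⟨fstL s, norm_fstL, ε/2, by linarith, rfl⟩, slice_subset_ball ε hε⟩
  have hTssne : Tss.Nonempty := ⟨s + 1, hmem 1 one_pos⟩
  have hbddTss : BddBelow Tss := ⟨0, fun r' hr' => hr'.1.le⟩
  have hbddTws : BddBelow Tws := ⟨0, fun r' hr' => hr'.1.le⟩
  have hbddTccs : BddBelow Tccs := ⟨0, fun r' hr' => hr'.1.le⟩
  have hlb : ∀ r' ∈ Tccs, s ≤ r' := by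
    rintro r' ⟨hpos, x, hx, n, l, W, hl0, hl1, hWo, hsubW⟩
    obtain ⟨c, hcmem, hdist⟩ := combo_far x hl1 hWo
    have hcb := hsubW hcmem
    rw [mem_closedBall] at hcb
    calc s ≤ ‖x - c‖ := hdist
      _ = dist c x := by rw [dist_eq_norm, norm_sub_rev]
      _ ≤ r' := hcb
  -- bounds for the infima
  have hTs_le : sInf Tss ≤ s := by
    apply le_of_forall_pos_le_add
    intro ε hε
    exact csInf_le hbddTss (hmem ε hε)
  have hTcc_ge : s ≤ sInf Tccs :=
    le_csInf ⟨s + 1, hsub2 (hsub1 (hmem 1 one_pos))⟩ hlb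
  have hc1 : sInf Tccs ≤ sInf Tws :=
    csInf_le_csInf hbddTccs (hTssne.mono hsub1) hsub2
  have hc2 : sInf Tws ≤ sInf Tss :=
    csInf_le_csInf hbddTws hTssne hsub1
  have hTcc : Tcc (XSp s) = s :=
    le_antisymm (le_trans hc1 (le_trans hc2 hTs_le)) hTcc_ge
  have hTw : Tw (XSp s) = s :=
    le_antisymm (le_trans hc2 hTs_le) (le_trans hTcc_ge hc1)
  have hTs : Ts (XSp s) = s :=
    le_antisymm hTs_le (le_trans hTcc_ge (le_trans hc1 hc2))
  exact ⟨hTcc, hTw, hTs⟩
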